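/- Let m, n ∈ ℕ with m ≥ 1, let a_{rk} (1 ≤ r ≤ m, 1 ≤ k ≤ n) be real numbers, and let λ_1, …, λ_n be positive reals. Let a = (a_{1k})_{k=1}^n ∈ ℝ^n, let C be the n×n matrix with entries C_{kr} = ∑_{s=2}^m a_{sk} a_{sr} (the Gram matrix of the columns g_k = (a_{2k}, …, a_{mk}) ∈ ℝ^{m−1}), and let C(λ) = diag(λ_1, …, λ_n) + C. Define y_r = (a_{rk}/√λ_k)_{k=1}^n ∈ ℝ^n for 1 ≤ r ≤ m. Then (C(λ)⁻¹ a, a) = det(I_m + γ(y_1, y_2, …, y_m)) / det(I_{m−1} + γ(y_2, …, y_m)) − 1. -/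

import Mathlib

open Matrix Finset

/-- General `m`: write `m = p + 1 ≥ 1` and index the rows `a_1, …, a_m` by `Fin (p + 1)`
(so `a 0` is the first row).  With `C` the Gram matrix of the columns
`g_k = (a_{2k}, …, a_{mk}) ∈ ℝ^{m−1}`, i.e. `C_{kr} = ∑_{s=2}^m a_{sk} a_{sr}`,
`C(λ) = diag(λ) + C` (`λₖ > 0`), and `y_r = (a_{rk}/√λₖ)ₖ` for `1 ≤ r ≤ m`, one has
`(C(λ)⁻¹ a₁, a₁) = det(I_m + γ(y₁, …, y_m)) / det(I_{m−1} + γ(y₂, …, y_m)) − 1`. -/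
theorem inv_quadratic_form_eq_det_ratio_sub_one {p n : ℕ} (a : Fin (p + 1) → Fin n → ℝ)
    (l : Fin n → ℝ) (hl : ∀ k, 0 < l k)
    (y : Fin (p + 1) → Fin n → ℝ)
    (hy : y = fun r k => a r k / Real.sqrt (l k)) :
    ((Matrix.diagonal l +
          Matrix.of fun k r : Fin n => ∑ s : Fin p, a s.succ k * a s.succ r)⁻¹ *ᵥ a 0)
        ⬝ᵥ a 0 =
      (Matrix.det (1 + Matrix.of fun i j : Fin (p + 1) => y i ⬝ᵥ y j)) /
        (Matrix.det (1 + Matrix.of fun i j : Fin p => y i.succ ⬝ᵥ y j.succ)) - 1 := by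
  set s : Fin n → ℝ := fun k => Real.sqrt (l k) with hs
  have hs0 : ∀ k, 0 < s k := fun k => Real.sqrt_pos.mpr (hl k)
  have hsne : ∀ k, s k ≠ 0 := fun k => (hs0 k).ne'
  have hsy : ∀ r k, s k * y r k = a r k := by
    intro r k
    simp only [hy, hs]
    rw [mul_comm, div_mul_cancel₀ _ (Real.sqrt_ne_zero'.mpr (hl k))]
  set B : Matrix (Fin p) (Fin n) ℝ := Matrix.of (fun i k => y i.succ k) with hB
  set M : Matrix (Fin n) (Fin n) ℝ := 1 + Bᵀ * B with hM
  have hBpsd : (Bᵀ * B).PosSemidef := by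
    have := Matrix.posSemidef_conjTranspose_mul_self B
    simpa using this
  have hMpd : M.PosDef := Matrix.PosDef.add_posSemidef Matrix.PosDef.one hBpsd
  have hMdet : IsUnit M.det := isUnit_iff_ne_zero.mpr hMpd.det_pos.ne'
  -- the key factorization
  have key : Matrix.diagonal l +
      Matrix.of (fun k r : Fin n => ∑ s : Fin p, a s.succ k * a s.succ r) =
      Matrix.diagonal s * M * Matrix.diagonal s := by
    ext k r
    rw [Matrix.mul_diagonal, Matrix.diagonal_mul]
    simp only [Matrix.add_apply, hM, Matrix.one_apply, Matrix.mul_apply,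
      Matrix.transpose_apply, Matrix.of_apply, Matrix.diagonal_apply]
    rw [mul_add, add_mul, Finset.mul_sum, Finset.sum_mul]
    congr 1
    · by_cases h : k = r
      · subst h
        simp [hs, Real.mul_self_sqrt (hl k).le]
      · simp [h]
    · refine Finset.sum_congr rfl fun i _ => ?_
      rw [show s k * (B i k * B i r) * s r = (s k * y i.succ k) * (s r * y i.succ r) from by
        simp only [hB, Matrix.of_apply]; ring, hsy, hsy]
  -- the quadratic form
  have hSinv : (Matrix.diagonal s)⁻¹ = Matrix.diagonal (fun k => (s k)⁻¹) :=
    Matrix.inv_eq_right_inv (by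
      rw [Matrix.diagonal_mul_diagonal,
        show (fun i => s i * (s i)⁻¹) = fun _ : Fin n => (1 : ℝ) from
          funext fun i => mul_inv_cancel₀ (hsne i),
        Matrix.diagonal_one])
  have hSa : Matrix.diagonal (fun k => (s k)⁻¹) *ᵥ a 0 = y 0 := by
    ext k
    rw [Matrix.mulVec_diagonal]
    simp only [hy, hs, div_eq_mul_inv]
    ring
  have hLHS : ((Matrix.diagonal l +
      Matrix.of fun k r : Fin n => ∑ s : Fin p, a s.succ k * a s.succ r)⁻¹ *ᵥ a 0) ⬝ᵥ a 0
      = y 0 ⬝ᵥ (M⁻¹ *ᵥ y 0) := by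
    rw [key, Matrix.mul_inv_rev, Matrix.mul_inv_rev, hSinv, ← Matrix.mul_assoc]
    rw [← Matrix.mulVec_mulVec, ← Matrix.mulVec_mulVec, hSa]
    simp only [dotProduct, Matrix.mulVec_diagonal]
    refine Finset.sum_congr rfl fun k _ => ?_
    simp only [hy, hs, div_eq_mul_inv]
    ring
  rw [hLHS]
  -- denominator
  have hden : (Matrix.of fun i j : Fin p => y i.succ ⬝ᵥ y j.succ) = B * Bᵀ := by
    ext i j
    simp [hB, Matrix.mul_apply, dotProduct]
  have hdet_den : Matrix.det (1 + Matrix.of fun i j : Fin p => y i.succ ⬝ᵥ y j.succ)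
      = M.det := by
    rw [hden, Matrix.det_one_add_mul_comm, hM]
  -- numerator
  set Y : Matrix (Fin (p + 1)) (Fin n) ℝ := Matrix.of y with hY
  have hnum1 : (Matrix.of fun i j : Fin (p + 1) => y i ⬝ᵥ y j) = Y * Yᵀ := by
    ext i j
    simp [hY, Matrix.mul_apply, dotProduct]
  have hYtY : (1 : Matrix (Fin n) (Fin n) ℝ) + Yᵀ * Y
      = M + Matrix.replicateCol Unit (y 0) * Matrix.replicateRow Unit (y 0) := by
    rw [hM]
    ext k r
    simp only [Matrix.add_apply, Matrix.mul_apply, Matrix.transpose_apply, Matrix.of_apply,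
      hY, hB, Matrix.replicateCol_apply, Matrix.replicateRow_apply]
    rw [Fin.sum_univ_succ]
    simp only [Finset.univ_unique, Finset.sum_singleton]
    ring
  have hdet_num : Matrix.det (1 + Matrix.of fun i j : Fin (p + 1) => y i ⬝ᵥ y j)
      = M.det * (1 + y 0 ⬝ᵥ (M⁻¹ *ᵥ y 0)) := by
    rw [hnum1, Matrix.det_one_add_mul_comm, hYtY,
      Matrix.det_add_replicateCol_mul_replicateRow hMdet]
    congr 1
    rw [Matrix.det_unique]
    simp only [Matrix.add_apply, Matrix.one_apply_eq]
    congr 1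
    rw [← Matrix.replicateRow_vecMul, Matrix.replicateRow_mul_replicateCol_apply, dotProduct_mulVec]
  rw [hdet_num, hdet_den, mul_div_cancel_left₀ _ hMpd.det_pos.ne']
  ring
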